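/- Let n ≥ 2 be an integer. If tan(π/(2n)) is the square root of a positive rational number (i.e. tan²(π/(2n)) ∈ ℚ), then n = 2 or n = 3. -/

import Mathlib

open Real Polynomial

/-- `2 cos (π / n)` is an algebraic integer. -/
lemma two_cos_isIntegral (n : ℕ) (hn : 1 ≤ n) :
    IsIntegral ℤ ((2 * Real.cos (Real.pi / n) : ℝ) : ℂ) := by
  set a : ℂ := (Real.pi / n : ℝ) * Complex.I with ha
  have hζ : IsIntegral ℤ (Complex.exp a) := by
    refine ⟨X ^ (2 * n) - C 1, monic_X_pow_sub_C 1 (by omega), ?_⟩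
    have hne : (n : ℂ) ≠ 0 := Nat.cast_ne_zero.mpr (by omega)
    have : Complex.exp a ^ (2 * n) = 1 := by
      rw [← Complex.exp_nat_mul, ← Complex.exp_two_pi_mul_I]
      congr 1
      push_cast [ha]
      field_simp
    simp [this]
  have h2 : IsIntegral ℤ (Complex.exp a + Complex.exp (-a)) := by
    have h3 : Complex.exp (-a) = Complex.exp a ^ (2 * n - 1) := by
      rw [← Complex.exp_nat_mul]
      have hne : (n : ℂ) ≠ 0 := Nat.cast_ne_zero.mpr (by omega)
      have : ((2 * n - 1 : ℕ) : ℂ) * a = 2 * Real.pi * Complex.I + -a := by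
        have : ((2 * n - 1 : ℕ) : ℂ) = 2 * n - 1 := by
          push_cast [Nat.cast_sub (by omega : 1 ≤ 2 * n)]; ring
        rw [this, ha]
        push_cast
        field_simp
        ring
      rw [this, Complex.exp_add, Complex.exp_two_pi_mul_I, one_mul]
    rw [h3]
    exact hζ.add (hζ.pow _)
  have key : ((2 * Real.cos (Real.pi / n) : ℝ) : ℂ)
      = Complex.exp a + Complex.exp (-a) := by
    rw [ha, show -(((Real.pi / n : ℝ) : ℂ) * Complex.I)
        = ((-(Real.pi / n) : ℝ) : ℂ) * Complex.I by push_cast; ring,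
      Complex.ofReal_neg, ← Complex.two_cos]
    push_cast [Complex.ofReal_cos]
    ring
  rw [key]
  exact h2

theorem tan_sq_rational_imp (n : ℕ) (hn : 2 ≤ n)
    (h : ∃ q : ℚ, 0 < q ∧ (Real.tan (Real.pi / (2 * n))) ^ 2 = (q : ℝ)) :
    n = 2 ∨ n = 3 := by
  by_contra hcon
  push_neg at hcon
  have hn4 : 4 ≤ n := by omega
  obtain ⟨q, hq, htan⟩ := h
  set θ : ℝ := Real.pi / (2 * n) with hθ
  have hnR : (0:ℝ) < n := by positivity
  have hθpos : 0 < θ := by positivity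
  have hθlt : θ < Real.pi / 2 := by
    have h2 : (2:ℝ) ≤ n := by exact_mod_cast hn
    rw [hθ, div_lt_div_iff₀ (by positivity) two_pos]
    nlinarith [Real.pi_pos]
  have hcpos : 0 < Real.cos θ := Real.cos_pos_of_mem_Ioo ⟨by linarith, hθlt⟩
  -- cos θ ^ 2 = 1 / (1 + q)
  have hq1 : (0:ℝ) < 1 + (q:ℝ) := by positivity
  have hsq : Real.cos θ ^ 2 * (1 + (q:ℝ)) = 1 := by
    have := htan
    rw [Real.tan_eq_sin_div_cos, div_pow] at this
    have hs : Real.sin θ ^ 2 = (q:ℝ) * Real.cos θ ^ 2 := by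
      field_simp at this; linarith
    nlinarith [Real.sin_sq_add_cos_sq θ]
  -- cos (π / n) = (1 - q)/(1 + q)
  have h2θ : Real.pi / n = 2 * θ := by rw [hθ]; field_simp
  have hcos : Real.cos (Real.pi / n) = (1 - (q:ℝ)) / (1 + (q:ℝ)) := by
    rw [h2θ, Real.cos_two_mul]
    field_simp
    try nlinarith [hsq]
  -- it's rational : 2 cos = (2*(1-q)/(1+q) : ℚ)
  set r : ℚ := 2 * (1 - q) / (1 + q) with hr
  have hrr : (r : ℝ) = 2 * Real.cos (Real.pi / n) := by
    rw [hcos, hr]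
    push_cast
    field_simp
  -- integrality ⇒ r is an integer
  have hint : IsIntegral ℤ ((r:ℝ) : ℂ) := by
    rw [hrr]; exact two_cos_isIntegral n (by omega)
  have hintQ : IsIntegral ℤ r := by
    have hf : Function.Injective ((Rat.castHom ℂ).toIntAlgHom) :=
      (Rat.castHom ℂ).injective
    rw [← isIntegral_algHom_iff ((Rat.castHom ℂ)).toIntAlgHom hf]
    convert hint using 1
    try push_cast
    try simp [RingHom.toIntAlgHom_apply]
  obtain ⟨m, hm⟩ := IsIntegrallyClosed.isIntegral_iff.mp hintQ
  -- bounds: 1 < m < 2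
  have hmR : (m : ℝ) = 2 * Real.cos (Real.pi / n) := by
    rw [← hrr]
    exact_mod_cast congrArg (Rat.cast : ℚ → ℝ) hm
  have hπn_pos : 0 < Real.pi / n := by positivity
  have hub : Real.cos (Real.pi / n) < 1 := by
    rcases lt_or_eq_of_le (Real.cos_le_one (Real.pi / n)) with h | h
    · exact h
    · exfalso
      have := (Real.cos_eq_one_iff_of_lt_of_lt
        (by nlinarith [Real.pi_pos] : -(2 * Real.pi) < Real.pi / n)
        (by nlinarith [Real.pi_pos] : Real.pi / n < 2 * Real.pi)).mp h
      exact absurd this (ne_of_gt hπn_pos)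
  have hlb : Real.sqrt 2 / 2 ≤ Real.cos (Real.pi / n) := by
    have h1 : Real.pi / n ≤ Real.pi / 4 := by
      apply div_le_div_of_nonneg_left Real.pi_pos.le (by norm_num)
      exact_mod_cast hn4
    calc Real.sqrt 2 / 2 = Real.cos (Real.pi / 4) := (Real.cos_pi_div_four).symm
      _ ≤ Real.cos (Real.pi / n) := by
          apply Real.cos_le_cos_of_nonneg_of_le_pi hπn_pos.le
            (by linarith [Real.pi_pos]) h1
  have hsqrt2 : (1:ℝ) < Real.sqrt 2 := by
    rw [show (1:ℝ) = Real.sqrt 1 by simp]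
    exact Real.sqrt_lt_sqrt (by norm_num) (by norm_num)
  have h1m : (1:ℝ) < (m:ℝ) := by rw [hmR]; nlinarith
  have h2m : (m:ℝ) < 2 := by rw [hmR]; nlinarith
  have : (1:ℤ) < m := by exact_mod_cast h1m
  have : m < 2 := by exact_mod_cast h2m
  omega
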